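/- Let Z be a nonnegative random variable and C⋆ ∈ (0,∞). Suppose E(1 − e^{−λZ}) = (C⋆ + o(1)) λ log(1/λ) as λ ↓ 0. Then E(Z e^{−λZ}) = (C⋆ + o(1)) log(1/λ) as λ ↓ 0. -/

import Mathlib

open MeasureTheory Filter Real

lemma exp_diff_lb {a b : ℝ} (hab : a ≤ b) :
    (b - a) * Real.exp (-b) ≤ Real.exp (-a) - Real.exp (-b) := by
  have h := Real.add_one_le_exp (b - a)
  have he : Real.exp (-a) = Real.exp (b - a) * Real.exp (-b) := by
    rw [← Real.exp_add]; ring_nf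
  nlinarith [Real.exp_pos (-b)]

lemma exp_diff_ub {a b : ℝ} (hab : a ≤ b) :
    Real.exp (-a) - Real.exp (-b) ≤ (b - a) * Real.exp (-a) := by
  have h := Real.add_one_le_exp (a - b)
  have he : Real.exp (-b) = Real.exp (a - b) * Real.exp (-a) := by
    rw [← Real.exp_add]; ring_nf
  nlinarith [Real.exp_pos (-a)]

section main
variable {Ω : Type*} [MeasurableSpace Ω] (P : Measure Ω) [IsProbabilityMeasure P]

lemma int_exp (Z : Ω → ℝ) (hZmeas : Measurable Z) (hZpos : ∀ ω, 0 ≤ Z ω)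
    (l : ℝ) (hl : 0 ≤ l) :
    Integrable (fun ω => Real.exp (-l * Z ω)) P := by
  apply (integrable_const (1:ℝ)).mono'
    ((hZmeas.const_mul (-l)).exp).aestronglyMeasurable
  filter_upwards with ω
  rw [Real.norm_eq_abs, abs_of_pos (Real.exp_pos _)]
  exact Real.exp_le_one_iff.mpr (by nlinarith [hZpos ω])

lemma int_zexp (Z : Ω → ℝ) (hZmeas : Measurable Z) (hZpos : ∀ ω, 0 ≤ Z ω)
    (l : ℝ) (hl : 0 < l) :
    Integrable (fun ω => Z ω * Real.exp (-l * Z ω)) P := by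
  apply (integrable_const (1/l)).mono'
    (hZmeas.mul ((hZmeas.const_mul (-l)).exp)).aestronglyMeasurable
  filter_upwards with ω
  simp only [Pi.mul_apply]
  rw [Real.norm_eq_abs, abs_of_nonneg (mul_nonneg (hZpos ω) (Real.exp_pos _).le)]
  rw [le_div_iff₀ hl]
  have h1 := Real.add_one_le_exp (l * Z ω)
  have h2 : Real.exp (l * Z ω) * Real.exp (-l * Z ω) = 1 := by
    rw [← Real.exp_add]; ring_nf; exact Real.exp_zero
  nlinarith [Real.exp_pos (-l * Z ω), hZpos ω, mul_nonneg hl.le (hZpos ω)]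

lemma Fdiff (Z : Ω → ℝ) (hZmeas : Measurable Z) (hZpos : ∀ ω, 0 ≤ Z ω)
    (s t : ℝ) (hs : 0 ≤ s) (ht : 0 ≤ t) :
    (∫ ω, (1 - Real.exp (-t * Z ω)) ∂P) - (∫ ω, (1 - Real.exp (-s * Z ω)) ∂P)
      = ∫ ω, (Real.exp (-s * Z ω) - Real.exp (-t * Z ω)) ∂P := by
  rw [integral_sub (int_exp P Z hZmeas hZpos s hs) (int_exp P Z hZmeas hZpos t ht),
    integral_sub (integrable_const 1) (int_exp P Z hZmeas hZpos t ht),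
    integral_sub (integrable_const 1) (int_exp P Z hZmeas hZpos s hs)]
  ring

lemma key1 (Z : Ω → ℝ) (hZmeas : Measurable Z) (hZpos : ∀ ω, 0 ≤ Z ω)
    (l : ℝ) (hl : 0 < l) :
    l / 2 * (∫ ω, Z ω * Real.exp (-l * Z ω) ∂P) ≤
      (∫ ω, (1 - Real.exp (-l * Z ω)) ∂P) - (∫ ω, (1 - Real.exp (-(l/2) * Z ω)) ∂P) := by
  rw [Fdiff P Z hZmeas hZpos (l/2) l (by positivity) hl.le, ← integral_const_mul]
  apply integral_mono ((int_zexp P Z hZmeas hZpos l hl).const_mul (l/2))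
    ((int_exp P Z hZmeas hZpos (l/2) (by positivity)).sub (int_exp P Z hZmeas hZpos l hl.le))
  intro ω
  have h := exp_diff_lb (a := l/2 * Z ω) (b := l * Z ω) (by nlinarith [hZpos ω])
  have e1 : -l * Z ω = -(l * Z ω) := by ring
  have e2 : -(l/2) * Z ω = -(l/2 * Z ω) := by ring
  simp only [Pi.sub_apply, e1, e2]
  nlinarith [h]

lemma key2 (Z : Ω → ℝ) (hZmeas : Measurable Z) (hZpos : ∀ ω, 0 ≤ Z ω)
    (l : ℝ) (hl : 0 < l) :
    (∫ ω, (1 - Real.exp (-(2*l) * Z ω)) ∂P) - (∫ ω, (1 - Real.exp (-l * Z ω)) ∂P) ≤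
      l * (∫ ω, Z ω * Real.exp (-l * Z ω) ∂P) := by
  rw [Fdiff P Z hZmeas hZpos l (2*l) hl.le (by positivity), ← integral_const_mul]
  apply integral_mono
    ((int_exp P Z hZmeas hZpos l hl.le).sub (int_exp P Z hZmeas hZpos (2*l) (by positivity)))
    ((int_zexp P Z hZmeas hZpos l hl).const_mul l)
  intro ω
  have h := exp_diff_ub (a := l * Z ω) (b := 2*l * Z ω) (by nlinarith [hZpos ω])
  have e1 : -l * Z ω = -(l * Z ω) := by ring
  have e2 : -(2*l) * Z ω = -(2*l * Z ω) := by ring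
  simp only [Pi.sub_apply, e1, e2]
  nlinarith [h]

end main

lemma T1 (F : ℝ → ℝ) (Cstar : ℝ)
    (hyp : Tendsto (fun l : ℝ => F l / (l * Real.log (1 / l)))
      (nhdsWithin 0 (Set.Ioi 0)) (nhds Cstar))
    (c : ℝ) (hc : 0 < c) :
    Tendsto (fun l : ℝ => F (c * l) / (l * Real.log (1 / l)))
      (nhdsWithin 0 (Set.Ioi 0)) (nhds (c * Cstar)) := by
  have hscale : Tendsto (fun l : ℝ => c * l) (nhdsWithin 0 (Set.Ioi 0))
      (nhdsWithin 0 (Set.Ioi 0)) := by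
    apply tendsto_nhdsWithin_of_tendsto_nhds_of_eventually_within
    · have : Tendsto (fun l : ℝ => c * l) (nhds 0) (nhds (c * 0)) :=
        (continuous_const.mul continuous_id).tendsto 0
      simpa using this.mono_left nhdsWithin_le_nhds
    · filter_upwards [self_mem_nhdsWithin] with x hx
      exact mul_pos hc hx
  have hlogtop : Tendsto (fun l : ℝ => Real.log (1 / l)) (nhdsWithin 0 (Set.Ioi 0)) atTop := by
    have h1 : Tendsto (fun l : ℝ => 1 / l) (nhdsWithin 0 (Set.Ioi 0)) atTop := by
      simpa [one_div] using (tendsto_inv_nhdsGT_zero (𝕜 := ℝ))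
    exact Real.tendsto_log_atTop.comp h1
  have hratio : Tendsto (fun l : ℝ => Real.log (1 / (c * l)) / Real.log (1 / l))
      (nhdsWithin 0 (Set.Ioi 0)) (nhds 1) := by
    have h0 : Tendsto (fun l : ℝ => Real.log (1 / c) / Real.log (1 / l) + 1)
        (nhdsWithin 0 (Set.Ioi 0)) (nhds (0 + 1)) :=
      (tendsto_const_nhds.div_atTop hlogtop).add tendsto_const_nhds
    rw [zero_add] at h0
    apply h0.congr'
    filter_upwards [Ioo_mem_nhdsGT_of_mem (by norm_num : (0:ℝ) ∈ Set.Ico (0:ℝ) 1)] with l hl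
    have hl0 : 0 < l := hl.1
    have hL : 0 < Real.log (1 / l) := Real.log_pos ((one_lt_div hl0).mpr hl.2)
    have hsplit : Real.log (1 / (c * l)) = Real.log (1 / c) + Real.log (1 / l) := by
      rw [one_div, one_div, one_div, mul_inv,
        Real.log_mul (inv_ne_zero hc.ne') (inv_ne_zero hl0.ne')]
    rw [hsplit, add_div, div_self hL.ne']
  have hmain := (hyp.comp hscale).mul (hratio.const_mul c)
  have hval : Cstar * (c * 1) = c * Cstar := by ring
  rw [hval] at hmain
  apply hmain.congr'
  filter_upwards [Ioo_mem_nhdsGT_of_mem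
    (by constructor <;> positivity : (0:ℝ) ∈ Set.Ico (0:ℝ) (min 1 (1/c)))] with l hl
  have hl0 : 0 < l := hl.1
  have hl1 : l < 1 := lt_of_lt_of_le hl.2 (min_le_left _ _)
  have hcl1 : c * l < 1 := by
    have := lt_of_lt_of_le hl.2 (min_le_right _ _)
    rw [lt_div_iff₀ hc] at this; linarith [this]
  have hcl0 : 0 < c * l := mul_pos hc hl0
  have hL : 0 < Real.log (1 / l) := Real.log_pos ((one_lt_div hl0).mpr hl1)
  have hL' : 0 < Real.log (1 / (c * l)) := Real.log_pos ((one_lt_div hcl0).mpr hcl1)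
  show F (c * l) / ((c * l) * Real.log (1 / (c * l))) * (c * (Real.log (1 / (c * l)) / Real.log (1 / l)))
      = F (c * l) / (l * Real.log (1 / l))
  field_simp

/-- If `E(1 - e^{-λZ}) = (C⋆ + o(1)) λ log(1/λ)` as `λ ↓ 0` for a nonnegative
random variable `Z`, then `E(Z e^{-λZ}) = (C⋆ + o(1)) log(1/λ)` as `λ ↓ 0`. -/
theorem laplace_asymptotics_derivative
    {Ω : Type*} [MeasurableSpace Ω] (P : Measure Ω) [IsProbabilityMeasure P]
    (Z : Ω → ℝ) (hZmeas : Measurable Z) (hZpos : ∀ ω, 0 ≤ Z ω)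
    (Cstar : ℝ) (hC : 0 < Cstar)
    (hyp : Tendsto (fun l : ℝ =>
        (∫ ω, (1 - Real.exp (-l * Z ω)) ∂P) / (l * Real.log (1 / l)))
      (nhdsWithin 0 (Set.Ioi 0)) (nhds Cstar)) :
    Tendsto (fun l : ℝ =>
        (∫ ω, Z ω * Real.exp (-l * Z ω) ∂P) / Real.log (1 / l))
      (nhdsWithin 0 (Set.Ioi 0)) (nhds Cstar) := by
  have hhalf := T1 (fun l : ℝ => ∫ ω, (1 - Real.exp (-l * Z ω)) ∂P) Cstar hyp (1/2) (by norm_num)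
  have htwo := T1 (fun l : ℝ => ∫ ω, (1 - Real.exp (-l * Z ω)) ∂P) Cstar hyp 2 (by norm_num)
  have upperT := (hyp.const_mul (2:ℝ)).sub (hhalf.const_mul (2:ℝ))
  rw [show 2*Cstar - 2*((1/2)*Cstar) = Cstar by ring] at upperT
  have lowerT := htwo.sub hyp
  rw [show 2*Cstar - Cstar = Cstar by ring] at lowerT
  refine tendsto_of_tendsto_of_tendsto_of_le_of_le' lowerT upperT ?_ ?_
  · filter_upwards [Ioo_mem_nhdsGT_of_mem (by norm_num : (0:ℝ) ∈ Set.Ico (0:ℝ) 1)] with l hl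
    have hl0 : 0 < l := hl.1
    have hL : 0 < Real.log (1/l) := Real.log_pos ((one_lt_div hl0).mpr hl.2)
    have hk := key2 P Z hZmeas hZpos l hl0
    set A := ∫ ω, (1 - Real.exp (-(2*l) * Z ω)) ∂P with hA
    set B := ∫ ω, (1 - Real.exp (-l * Z ω)) ∂P with hB
    set G := ∫ ω, Z ω * Real.exp (-l * Z ω) ∂P with hG
    rw [show A/(l*Real.log (1/l)) - B/(l*Real.log (1/l)) = (A-B)/(l*Real.log (1/l)) by ring,
      div_le_div_iff₀ (by positivity) hL]
    nlinarith [mul_le_mul_of_nonneg_right hk hL.le]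
  · filter_upwards [Ioo_mem_nhdsGT_of_mem (by norm_num : (0:ℝ) ∈ Set.Ico (0:ℝ) 1)] with l hl
    have hl0 : 0 < l := hl.1
    have hL : 0 < Real.log (1/l) := Real.log_pos ((one_lt_div hl0).mpr hl.2)
    have hk := key1 P Z hZmeas hZpos l hl0
    rw [show (1/2:ℝ)*l = l/2 by ring]
    set A := ∫ ω, (1 - Real.exp (-l * Z ω)) ∂P with hA
    set B := ∫ ω, (1 - Real.exp (-(l/2) * Z ω)) ∂P with hB
    set G := ∫ ω, Z ω * Real.exp (-l * Z ω) ∂P with hG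
    rw [show 2*(A/(l*Real.log (1/l))) - 2*(B/(l*Real.log (1/l)))
        = (2*(A-B))/(l*Real.log (1/l)) by ring,
      div_le_div_iff₀ hL (by positivity)]
    nlinarith [mul_le_mul_of_nonneg_right hk hL.le]
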